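/- arXiv:2506.22536 — 4 statements merged into one kernel-verified Lean document; each statement's English description precedes it below -/
import Mathlib

section
/- Suppose μ > 0 and set λ = 1/2. Then for every α ∈ (0,1), the optimal policy asymptotically attains the maximal rejection probability over all policies: lim_{n→∞} P(|T_{n,1/2}(θ_n*)| > z_{1−α/2}) = 1 and lim_{n→∞} sup_{θ_n ∈ Θ} P(|T_{n,1/2}(θ_n)| > z_{1−α/2}) = 1; in particular lim_{n→∞} P(|T_{n,1/2}(θ_n*)| > z_{1−α/2}) = lim_{n→∞} sup_{θ_n ∈ Θ} P(|T_{n,1/2}(θ_n)| > z_{1−α/2}). -/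
open MeasureTheory ProbabilityTheory Filter

/-- Standard normal cumulative distribution function Φ. -/
noncomputable def stdNormalCDF (x : ℝ) : ℝ :=
  ∫ t in Set.Iic x, (1 / Real.sqrt (2 * Real.pi)) * Real.exp (-(t ^ 2) / 2)

/-- A policy `θ_n = (ϑ_1, …)`: a sequence of {0,1}-valued random variables such that `ϑ_1`
is independent of the reward sequence and, for `i ≥ 2`, `ϑ_i` is measurable with respect to
`σ(ϑ_1, R_1, …, R_{i-1})`. -/
structure Policy {Ω : Type*} [MeasurableSpace Ω] (P : Measure Ω) (R : ℕ → Ω → ℝ) where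
  ϑ : ℕ → Ω → ℝ
  meas : ∀ i, Measurable (ϑ i)
  vals : ∀ i ω, ϑ i ω = 0 ∨ ϑ i ω = 1
  indep_first : IndepFun (ϑ 1) (fun ω i => R i ω) P
  adapted : ∀ i, 2 ≤ i →
    @Measurable Ω ℝ (MeasurableSpace.comap (ϑ 1) inferInstance ⊔
      ⨆ j ∈ Set.Icc 1 (i - 1), MeasurableSpace.comap (R j) inferInstance) _ (ϑ i)

/-- The oracle weighted TAB statistic `T_{m,λ}(θ_n)` under a policy `ϑ`:
`T_0 = 0` and `T_m = T_{m-1} + (2ϑ_m - 1)(λμ/((1-λ)n) + R_m/(√n σ))`. -/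
noncomputable def Tstat {Ω : Type*} (R : ℕ → Ω → ℝ) (lam μ σ : ℝ) (n : ℕ)
    (ϑ : ℕ → Ω → ℝ) : ℕ → Ω → ℝ
  | 0 => fun _ => 0
  | m + 1 => fun ω =>
      Tstat R lam μ σ n ϑ m ω +
        (2 * ϑ (m + 1) ω - 1) * (lam * μ / ((1 - lam) * n) + R (m + 1) ω / (Real.sqrt n * σ))

/-- The statistic `T_{m,λ}(θ_n^*)` under the optimal policy `θ_n^*`, where `ξ` is the
fair-coin first action:  for `i ≥ 2`, `ϑ_i^* = 1` iff `T_{i-1,λ}(θ^*_{i-1}) ≥ 0`. -/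
noncomputable def Tstar {Ω : Type*} (R : ℕ → Ω → ℝ) (lam μ σ : ℝ) (n : ℕ)
    (ξ : Ω → ℝ) : ℕ → Ω → ℝ
  | 0 => fun _ => 0
  | 1 => fun ω => (2 * ξ ω - 1) * (lam * μ / ((1 - lam) * n) + R 1 ω / (Real.sqrt n * σ))
  | m + 2 => fun ω =>
      Tstar R lam μ σ n ξ (m + 1) ω +
        (2 * (if 0 ≤ Tstar R lam μ σ n ξ (m + 1) ω then (1 : ℝ) else 0) - 1) *
          (lam * μ / ((1 - lam) * n) + R (m + 2) ω / (Real.sqrt n * σ))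

/-- `ω_n = λμ/(1-λ) + √n μ/σ`. -/
noncomputable def omegaN (lam μ σ : ℝ) (n : ℕ) : ℝ :=
  lam * μ / (1 - lam) + Real.sqrt n * μ / σ

/-- `σ₀ = √(1 + μ²/σ²)`. -/
noncomputable def sigma0 (μ σ : ℝ) : ℝ := Real.sqrt (1 + μ ^ 2 / σ ^ 2)

lemma tstar_abs_ge {Ω : Type*} (R : ℕ → Ω → ℝ) (lam μ σ : ℝ) (n : ℕ) (ξ : Ω → ℝ)
    (hξ : ∀ ω, ξ ω = 0 ∨ ξ ω = 1) (m : ℕ) (ω : Ω) :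
    (∑ k ∈ Finset.Icc 1 m, (lam * μ / ((1 - lam) * n) + R k ω / (Real.sqrt n * σ)))
      ≤ |Tstar R lam μ σ n ξ m ω| := by
  induction m using Nat.twoStepInduction with
  | zero => simp [Tstar]
  | one =>
    rw [Finset.Icc_self, Finset.sum_singleton]
    have h1 : |2 * ξ ω - 1| = 1 := by rcases hξ ω with h | h <;> rw [h] <;> norm_num
    calc lam * μ / ((1 - lam) * n) + R 1 ω / (Real.sqrt n * σ)
        ≤ |lam * μ / ((1 - lam) * n) + R 1 ω / (Real.sqrt n * σ)| := le_abs_self _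
      _ = |Tstar R lam μ σ n ξ 1 ω| := by
          show _ = |(2 * ξ ω - 1) * (lam * μ / ((1 - lam) * n) + R 1 ω / (Real.sqrt n * σ))|
          rw [abs_mul, h1, one_mul]
  | more m _ ih =>
    rw [Finset.sum_Icc_succ_top (by omega : 1 ≤ m + 2)]
    set e := lam * μ / ((1 - lam) * n) + R (m + 2) ω / (Real.sqrt n * σ) with he
    set T := Tstar R lam μ σ n ξ (m + 1) ω with hT
    have key : |T| + e ≤ |Tstar R lam μ σ n ξ (m + 2) ω| := by
      show |T| + e ≤ |T + (2 * (if 0 ≤ T then (1:ℝ) else 0) - 1) * e|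
      by_cases h : 0 ≤ T
      · rw [if_pos h]
        have : T + (2 * (1:ℝ) - 1) * e = |T| + e := by rw [abs_of_nonneg h]; ring
        rw [show (2 * (1:ℝ) - 1) = 1 by norm_num] at this ⊢
        calc |T| + e = T + 1 * e := by rw [abs_of_nonneg h]; ring
          _ ≤ |T + 1 * e| := le_abs_self _
      · rw [if_neg h]
        push_neg at h
        calc |T| + e = -(T + (2 * (0:ℝ) - 1) * e) := by rw [abs_of_neg h]; ring
          _ ≤ |T + (2 * (0:ℝ) - 1) * e| := neg_le_abs _
    calc (∑ k ∈ Finset.Icc 1 (m + 1),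
          (lam * μ / ((1 - lam) * n) + R k ω / (Real.sqrt n * σ))) + e
        ≤ |T| + e := by exact add_le_add_left ih e
      _ ≤ _ := key

lemma tstat_one {Ω : Type*} (R : ℕ → Ω → ℝ) (lam μ σ : ℝ) (n : ℕ) (m : ℕ) (ω : Ω) :
    Tstat R lam μ σ n (fun _ _ => (1:ℝ)) m ω
      = ∑ k ∈ Finset.Icc 1 m, (lam * μ / ((1 - lam) * n) + R k ω / (Real.sqrt n * σ)) := by
  induction m with
  | zero => simp [Tstat]
  | succ m ih =>
    rw [Finset.sum_Icc_succ_top (by omega : 1 ≤ m + 1), ← ih]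
    show Tstat R lam μ σ n _ m ω + _ = _
    norm_num

lemma sqrt_nat_atTop : Tendsto (fun n : ℕ => Real.sqrt n) atTop atTop := by
  refine tendsto_atTop_atTop.2 fun b => ⟨⌈b⌉₊ ^ 2, fun n hn => ?_⟩
  calc b ≤ (⌈b⌉₊ : ℝ) := Nat.le_ceil b
    _ = Real.sqrt ((⌈b⌉₊ : ℝ) ^ 2) := (Real.sqrt_sq (by positivity)).symm
    _ ≤ Real.sqrt n := Real.sqrt_le_sqrt (by exact_mod_cast hn)

/-- for `μ > 0` and `λ = 1/2`, the optimal policy asymptotically attains the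
maximal rejection probability: both `P(|T_{n,1/2}(θ_n^*)| > z_{1-α/2}) → 1` and
`sup_{θ_n ∈ Θ} P(|T_{n,1/2}(θ_n)| > z_{1-α/2}) → 1` (hence the limits agree). -/
theorem stmt0
    {Ω : Type*} [MeasurableSpace Ω] (P : Measure Ω) [IsProbabilityMeasure P]
    (R : ℕ → Ω → ℝ) (M μ σ : ℝ) (hM : 0 < M)
    (hRmeas : ∀ i, Measurable (R i))
    (hiid : iIndepFun R P)
    (hident : ∀ i, 1 ≤ i → Measure.map (R i) P = Measure.map (R 1) P)
    (hbdd : ∀ i, 1 ≤ i → ∀ᵐ ω ∂P, |R i ω| ≤ M)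
    (hμ : μ = ∫ ω, R 1 ω ∂P)
    (hσ : 0 < σ) (hvar : σ ^ 2 = ∫ ω, (R 1 ω - μ) ^ 2 ∂P)
    (hμpos : 0 < μ)
    (ξ : Ω → ℝ) (hξmeas : Measurable ξ) (hξvals : ∀ ω, ξ ω = 0 ∨ ξ ω = 1)
    (hξ1 : P {ω | ξ ω = 1} = 1 / 2) (hξ0 : P {ω | ξ ω = 0} = 1 / 2)
    (hξindep : IndepFun ξ (fun ω i => R i ω) P)
    (α z : ℝ) (hα : α ∈ Set.Ioo (0 : ℝ) 1) (hz : stdNormalCDF z = 1 - α / 2) :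
    Tendsto (fun n : ℕ => (P {ω | z < |Tstar R (1 / 2) μ σ n ξ n ω|}).toReal)
        atTop (nhds 1) ∧
      Tendsto (fun n : ℕ =>
          ⨆ θ : Policy P R, (P {ω | z < |Tstat R (1 / 2) μ σ n θ.ϑ n ω|}).toReal)
        atTop (nhds 1) := by
  classical
  -- the common lower-bound statistic
  set S : ℕ → Ω → ℝ := fun n ω => ∑ k ∈ Finset.Icc 1 n,
    ((1 / 2 : ℝ) * μ / ((1 - 1 / 2) * (n : ℝ)) + R k ω / (Real.sqrt n * σ)) with hS
  have hSmeas : ∀ n, Measurable (S n) := by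
    intro n
    apply Finset.measurable_sum
    intro k _
    exact (measurable_const.add ((hRmeas k).div_const _))
  have hAmeas : ∀ n, MeasurableSet {ω | z < S n ω} :=
    fun n => measurableSet_lt measurable_const (hSmeas n)
  -- basic integrability facts
  have hone : ∀ i, 1 ≤ i → MemLp (R i) 2 P := by
    intro i hi
    refine MemLp.of_bound (hRmeas i).aestronglyMeasurable M ?_
    filter_upwards [hbdd i hi] with ω h
    rwa [Real.norm_eq_abs]
  have hint : ∀ i, 1 ≤ i → Integrable (R i) P :=
    fun i hi => (hone i hi).integrable one_le_two
  have hswap : ∀ (g : ℝ → ℝ), Measurable g → ∀ i, 1 ≤ i →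
      ∫ ω, g (R i ω) ∂P = ∫ ω, g (R 1 ω) ∂P := by
    intro g hg i hi
    rw [← integral_map (hRmeas i).aemeasurable hg.aestronglyMeasurable, hident i hi,
      integral_map (hRmeas 1).aemeasurable hg.aestronglyMeasurable]
  have hmean : ∀ i, 1 ≤ i → ∫ ω, R i ω ∂P = μ := by
    intro i hi
    have h := hswap id measurable_id i hi
    simpa using h.trans hμ.symm
  have hvar1 : variance (R 1) P = σ ^ 2 := by
    rw [variance_eq_integral (hone 1 le_rfl).aemeasurable, hvar]
    apply integral_congr_ae
    filter_upwards with ω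
    simp [← hμ]
  have hvarR : ∀ i, 1 ≤ i → variance (R i) P = σ ^ 2 := by
    intro i hi
    rw [variance_eq_sub (hone i hi), ← hvar1, variance_eq_sub (hone 1 le_rfl)]
    have h2 : ∫ ω, ((R i) ^ 2) ω ∂P = ∫ ω, ((R 1) ^ 2) ω ∂P := by
      simpa using hswap (fun x => x ^ 2) (measurable_id.pow_const 2) i hi
    rw [h2, hmean i hi, hμ]
  -- the sum of rewards
  set Y : ℕ → Ω → ℝ := fun n ω => ∑ k ∈ Finset.Icc 1 n, R k ω with hY
  have hYfun : ∀ n, (∑ k ∈ Finset.Icc 1 n, R k) = Y n := by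
    intro n; funext ω; simp [hY]
  have hYmem : ∀ n, MemLp (Y n) 2 P := by
    intro n
    have h := memLp_finset_sum' (μ := P) (p := 2) (Finset.Icc 1 n)
      (fun i hi => hone i (Finset.mem_Icc.1 hi).1)
    rwa [hYfun n] at h
  have hYmean : ∀ n, ∫ ω, Y n ω ∂P = n * μ := by
    intro n
    rw [hY]
    rw [integral_finset_sum _ (fun i hi => hint i (Finset.mem_Icc.1 hi).1)]
    rw [Finset.sum_congr rfl (fun i hi => hmean i (Finset.mem_Icc.1 hi).1),
      Finset.sum_const, Nat.card_Icc, nsmul_eq_mul]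
    norm_num
  have hYvar : ∀ n, variance (Y n) P = n * σ ^ 2 := by
    intro n
    rw [← hYfun n]
    rw [IndepFun.variance_sum (fun i hi => hone i (Finset.mem_Icc.1 hi).1)
      (fun i _ j _ hij => hiid.indepFun hij)]
    rw [Finset.sum_congr rfl (fun i hi => hvarR i (Finset.mem_Icc.1 hi).1),
      Finset.sum_const, Nat.card_Icc, nsmul_eq_mul]
    norm_num
  -- rewriting S
  have hSeq : ∀ n, 1 ≤ n → ∀ ω, S n ω = μ + Y n ω / (Real.sqrt n * σ) := by
    intro n hn ω
    have hn0 : (n : ℝ) ≠ 0 := Nat.cast_ne_zero.2 (by omega)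
    rw [hS]
    simp only
    rw [Finset.sum_add_distrib, ← Finset.sum_div, Finset.sum_const, Nat.card_Icc,
      nsmul_eq_mul]
    have hc : ((n + 1 - 1 : ℕ) : ℝ) = (n : ℝ) := by norm_num
    rw [hc]
    have h2 : (n : ℝ) * (1 / 2 * μ) / ((1 - 1 / 2) * (n : ℝ)) = μ := by
      field_simp
      ring
    rw [h2, ← Finset.sum_div]
  -- Chebyshev bound
  set q : ℕ → ℝ := fun n => Real.sqrt n * μ + σ * (μ - z) with hqdef
  have hq : Tendsto q atTop atTop :=
    tendsto_atTop_add_const_right _ _ (sqrt_nat_atTop.atTop_mul_const hμpos)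
  have hbound : ∀ᶠ n in atTop, (P ({ω | z < S n ω}ᶜ)).toReal ≤ σ ^ 2 / q n ^ 2 := by
    filter_upwards [eventually_ge_atTop 1, hq.eventually_gt_atTop 0] with n hn hqn
    have hnpos : (0 : ℝ) < n := by exact_mod_cast Nat.lt_of_lt_of_le Nat.zero_lt_one hn
    have hsq : (0 : ℝ) < Real.sqrt n := Real.sqrt_pos.2 hnpos
    have hsqσ : (0 : ℝ) < Real.sqrt n * σ := mul_pos hsq hσ
    set e : ℝ := Real.sqrt n * q n with hedef
    have he : 0 < e := mul_pos hsq hqn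
    have hee : e = n * μ + Real.sqrt n * σ * (μ - z) := by
      rw [hedef, hqdef]
      simp only
      rw [mul_add, ← mul_assoc, Real.mul_self_sqrt (le_of_lt hnpos)]
      ring
    have hsub : {ω | z < S n ω}ᶜ ⊆ {ω | e ≤ |Y n ω - ∫ ω, Y n ω ∂P|} := by
      intro ω hω
      simp only [Set.mem_compl_iff, Set.mem_setOf_eq, not_lt] at hω
      rw [hSeq n hn ω] at hω
      have h1 : Y n ω / (Real.sqrt n * σ) ≤ z - μ := by linarith
      have h2 : Y n ω ≤ (z - μ) * (Real.sqrt n * σ) := by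
        rwa [div_le_iff₀ hsqσ] at h1
      have h3 : Y n ω - n * μ ≤ -e := by
        rw [hee]; nlinarith
      simp only [Set.mem_setOf_eq, hYmean n]
      rw [le_abs]
      right
      linarith
    calc (P ({ω | z < S n ω}ᶜ)).toReal
        ≤ (P {ω | e ≤ |Y n ω - ∫ ω, Y n ω ∂P|}).toReal :=
          ENNReal.toReal_mono (measure_ne_top P _) (measure_mono hsub)
      _ ≤ (ENNReal.ofReal (variance (Y n) P / e ^ 2)).toReal :=
          ENNReal.toReal_mono ENNReal.ofReal_ne_top
            (meas_ge_le_variance_div_sq (hYmem n) he)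
      _ = variance (Y n) P / e ^ 2 :=
          ENNReal.toReal_ofReal (div_nonneg (variance_nonneg _ _) (by positivity))
      _ = σ ^ 2 / q n ^ 2 := by
          rw [hYvar n, hedef, mul_pow, Real.sq_sqrt (le_of_lt hnpos)]
          rw [mul_div_mul_left _ _ (ne_of_gt hnpos)]
  have hzero : Tendsto (fun n => (P ({ω | z < S n ω}ᶜ)).toReal) atTop (nhds 0) := by
    refine squeeze_zero' (Eventually.of_forall fun n => ENNReal.toReal_nonneg) hbound ?_
    have hq2 : Tendsto (fun n => q n ^ 2) atTop atTop := by
      have := hq.atTop_mul_atTop₀ hq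
      simpa [pow_two] using this
    exact tendsto_const_nhds.div_atTop hq2
  have hg : Tendsto (fun n => (P {ω | z < S n ω}).toReal) atTop (nhds 1) := by
    have heq : ∀ n, (P {ω | z < S n ω}).toReal = 1 - (P ({ω | z < S n ω}ᶜ)).toReal := by
      intro n
      have h := prob_compl_eq_one_sub (μ := P) (hAmeas n).compl
      rw [compl_compl] at h
      rw [h, ENNReal.toReal_sub_of_le prob_le_one ENNReal.one_ne_top, ENNReal.toReal_one]
    simp only [heq]
    have h1 : Tendsto (fun n : ℕ => 1 - (P ({ω | z < S n ω}ᶜ)).toReal) atTop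
        (nhds (1 - 0)) := Tendsto.sub tendsto_const_nhds hzero
    simpa using h1
  have probToRealLe : ∀ s : Set Ω, (P s).toReal ≤ 1 := by
    intro s
    have := ENNReal.toReal_mono ENNReal.one_ne_top (prob_le_one (μ := P) (s := s))
    simpa using this
  constructor
  · -- Tstar part
    refine tendsto_of_tendsto_of_tendsto_of_le_of_le hg tendsto_const_nhds ?_ ?_
    · intro n
      refine ENNReal.toReal_mono (measure_ne_top P _) (measure_mono ?_)
      intro ω hω
      exact lt_of_lt_of_le hω (tstar_abs_ge R (1 / 2) μ σ n ξ hξvals n ω)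
    · intro n; exact probToRealLe _
  · -- sup part
    let θ0 : Policy P R :=
      { ϑ := fun _ _ => 1
        meas := fun _ => measurable_const
        vals := fun _ _ => Or.inr rfl
        indep_first := by
          rw [IndepFun_iff_Indep, MeasurableSpace.comap_const]
          exact indep_bot_left _
        adapted := fun i _ => measurable_const }
    have bdd : ∀ n, BddAbove (Set.range fun θ : Policy P R =>
        (P {ω | z < |Tstat R (1 / 2) μ σ n θ.ϑ n ω|}).toReal) := by
      intro n
      refine ⟨1, ?_⟩
      rintro x ⟨θ, rfl⟩
      exact probToRealLe _
    refine tendsto_of_tendsto_of_tendsto_of_le_of_le hg tendsto_const_nhds ?_ ?_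
    · intro n
      have h1 : (P {ω | z < S n ω}).toReal
          ≤ (P {ω | z < |Tstat R (1 / 2) μ σ n θ0.ϑ n ω|}).toReal := by
        refine ENNReal.toReal_mono (measure_ne_top P _) (measure_mono ?_)
        intro ω hω
        have h2 : Tstat R (1 / 2) μ σ n θ0.ϑ n ω = S n ω :=
          tstat_one R (1 / 2) μ σ n n ω
        have h3 : S n ω ≤ |Tstat R (1 / 2) μ σ n θ0.ϑ n ω| := by
          rw [h2]; exact le_abs_self _
        exact lt_of_lt_of_le hω h3
      exact le_trans h1 (le_ciSup (bdd n) θ0)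
    · intro n
      exact Real.iSup_le (fun θ => probToRealLe _) zero_le_one
end

section
/- (Consistency against fixed alternatives.) If μ > 0, then for every α ∈ (0,1), lim_{n→∞} P(|T_{n,λ}(θ_n*)| > z_{1−α/2}) = 1 and lim_{n→∞} sup_{θ_n ∈ Θ} P(|T_{n,λ}(θ_n)| > z_{1−α/2}) = 1. -/
open MeasureTheory ProbabilityTheory Filter

lemma Tstat_const_one {Ω : Type*} (R : ℕ → Ω → ℝ) (lam μ σ : ℝ) (n : ℕ) (m : ℕ) (ω : Ω) :
    Tstat R lam μ σ n (fun _ _ => 1) m ω =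
      m * (lam * μ / ((1 - lam) * n)) +
        (∑ i ∈ Finset.range m, R (i + 1) ω) / (Real.sqrt n * σ) := by
  induction m with
  | zero => simp [Tstat]
  | succ m ih =>
    simp only [Tstat, ih, Finset.sum_range_succ]
    push_cast
    rw [add_div]
    ring

lemma Tstar_lb {Ω : Type*} (R : ℕ → Ω → ℝ) (lam μ σ : ℝ) (n : ℕ) (ξ : Ω → ℝ)
    (hξ : ∀ ω, ξ ω = 0 ∨ ξ ω = 1) (m : ℕ) (ω : Ω) :
    m * (lam * μ / ((1 - lam) * n)) +
        (∑ i ∈ Finset.range m, R (i + 1) ω) / (Real.sqrt n * σ) ≤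
      |Tstar R lam μ σ n ξ m ω| := by
  induction m with
  | zero => simp [Tstar]
  | succ m ih =>
    rcases m with _ | k
    · have h1 : Tstar R lam μ σ n ξ 1 ω =
        (2 * ξ ω - 1) * (lam * μ / ((1 - lam) * n) + R 1 ω / (Real.sqrt n * σ)) := rfl
      have habs : |2 * ξ ω - 1| = 1 := by rcases hξ ω with h | h <;> rw [h] <;> norm_num
      rw [h1, abs_mul, habs, one_mul]
      have := le_abs_self (lam * μ / ((1 - lam) * n) + R 1 ω / (Real.sqrt n * σ))
      norm_num [Finset.sum_range_one]
      linarith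
    · rw [show k + 1 + 1 = k + 2 by omega]
      have h2 : Tstar R lam μ σ n ξ (k + 2) ω =
        Tstar R lam μ σ n ξ (k + 1) ω +
          (2 * (if 0 ≤ Tstar R lam μ σ n ξ (k + 1) ω then (1 : ℝ) else 0) - 1) *
            (lam * μ / ((1 - lam) * n) + R (k + 2) ω / (Real.sqrt n * σ)) := rfl
      set T := Tstar R lam μ σ n ξ (k + 1) ω with hT
      set X := lam * μ / ((1 - lam) * n) + R (k + 2) ω / (Real.sqrt n * σ) with hX
      have key : |T| + X ≤ |Tstar R lam μ σ n ξ (k + 2) ω| := by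
        rw [h2]
        by_cases h : 0 ≤ T
        · simp only [if_pos h]
          have : |T| = T := abs_of_nonneg h
          rw [this]
          have := le_abs_self (T + (2 * (1:ℝ) - 1) * X)
          linarith
        · simp only [if_neg h]
          have hT' : |T| = -T := abs_of_neg (not_le.mp h)
          have := neg_abs_le (T + (2 * (0:ℝ) - 1) * X)
          linarith
      rw [Finset.sum_range_succ, add_div]
      set c := lam * μ / ((1 - lam) * (n:ℝ)) with hc
      rw [show k + 1 + 1 = k + 2 by omega]
      have hcast : ((k + 2 : ℕ) : ℝ) * c = ((k + 1 : ℕ) : ℝ) * c + c := by push_cast; ring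
      calc ((k+2:ℕ):ℝ) * c +
            ((∑ x ∈ Finset.range (k + 1), R (x + 1) ω) / (Real.sqrt n * σ)
              + R (k + 2) ω / (Real.sqrt n * σ))
          = (((k+1:ℕ):ℝ) * c + (∑ x ∈ Finset.range (k + 1), R (x + 1) ω) / (Real.sqrt n * σ))
              + X := by rw [hX]; push_cast; ring
        _ ≤ |T| + X := by linarith [ih]
        _ ≤ _ := key

lemma Tstat_meas {Ω : Type*} [MeasurableSpace Ω] (R : ℕ → Ω → ℝ) (lam μ σ : ℝ) (n : ℕ)
    (ϑ : ℕ → Ω → ℝ) (hϑ : ∀ i, Measurable (ϑ i)) (hR : ∀ i, Measurable (R i)) (m : ℕ) :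
    Measurable (Tstat R lam μ σ n ϑ m) := by
  induction m with
  | zero => exact measurable_const
  | succ m ih =>
    exact ih.add ((((hϑ (m+1)).const_mul 2).sub measurable_const).mul
      (((hR (m+1)).div_const _).const_add _))

lemma Tstar_meas {Ω : Type*} [MeasurableSpace Ω] (R : ℕ → Ω → ℝ) (lam μ σ : ℝ) (n : ℕ)
    (ξ : Ω → ℝ) (hξ : Measurable ξ) (hR : ∀ i, Measurable (R i)) (m : ℕ) :
    Measurable (Tstar R lam μ σ n ξ m) := by
  induction m with
  | zero => exact measurable_const
  | succ m ih =>
    rcases m with _ | k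
    · exact ((hξ.const_mul 2).sub measurable_const).mul
        (((hR 1).div_const _).const_add _)
    · have hif : Measurable (fun ω => if 0 ≤ Tstar R lam μ σ n ξ (k+1) ω then (1:ℝ) else 0) :=
        Measurable.ite (measurableSet_le measurable_const ih) measurable_const measurable_const
      exact ih.add (((hif.const_mul 2).sub measurable_const).mul
        (((hR (k+2)).div_const _).const_add _))

lemma indepFun_const_left {Ω β γ : Type*} [MeasurableSpace Ω] {mβ : MeasurableSpace β}
    {mγ : MeasurableSpace γ} (P : Measure Ω) [IsProbabilityMeasure P] (c : β) (g : Ω → γ) :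
    IndepFun (fun _ => c) g P := by
  rw [indepFun_iff_measure_inter_preimage_eq_mul]
  intro s t _ _
  by_cases hc : c ∈ s
  · have h : (fun _ : Ω => c) ⁻¹' s = Set.univ := by ext; simp [hc]
    simp [h, Set.univ_inter]
  · have h : (fun _ : Ω => c) ⁻¹' s = ∅ := by ext; simp [hc]
    simp [h]

/-- Consistency against fixed alternatives: if `μ > 0`, then
`P(|T_{n,λ}(θ_n^*)| > z_{1-α/2}) → 1` and `sup_{θ_n ∈ Θ} P(|T_{n,λ}(θ_n)| > z_{1-α/2}) → 1`. -/
theorem stmt5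
    {Ω : Type*} [MeasurableSpace Ω] (P : Measure Ω) [IsProbabilityMeasure P]
    (R : ℕ → Ω → ℝ) (M μ σ lam : ℝ) (hM : 0 < M)
    (hRmeas : ∀ i, Measurable (R i))
    (hiid : iIndepFun R P)
    (hident : ∀ i, 1 ≤ i → Measure.map (R i) P = Measure.map (R 1) P)
    (hbdd : ∀ i, 1 ≤ i → ∀ᵐ ω ∂P, |R i ω| ≤ M)
    (hμ : μ = ∫ ω, R 1 ω ∂P)
    (hσ : 0 < σ) (hvar : σ ^ 2 = ∫ ω, (R 1 ω - μ) ^ 2 ∂P)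
    (hlam : lam ∈ Set.Ioo (0 : ℝ) 1)
    (hμpos : 0 < μ)
    (ξ : Ω → ℝ) (hξmeas : Measurable ξ) (hξvals : ∀ ω, ξ ω = 0 ∨ ξ ω = 1)
    (hξ1 : P {ω | ξ ω = 1} = 1 / 2) (hξ0 : P {ω | ξ ω = 0} = 1 / 2)
    (hξindep : IndepFun ξ (fun ω i => R i ω) P)
    (α z : ℝ) (hα : α ∈ Set.Ioo (0 : ℝ) 1) (hz : stdNormalCDF z = 1 - α / 2) :
    Tendsto (fun n : ℕ => (P {ω | z < |Tstar R lam μ σ n ξ n ω|}).toReal)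
        atTop (nhds 1) ∧
      Tendsto (fun n : ℕ =>
          ⨆ θ : Policy P R, (P {ω | z < |Tstat R lam μ σ n θ.ϑ n ω|}).toReal)
        atTop (nhds 1) := by
  obtain ⟨hl0, hl1⟩ := hlam
  have h1l : (1 : ℝ) - lam ≠ 0 := by linarith
  -- Integrability of R 1
  have hint : Integrable (R 1) P := by
    refine ⟨(hRmeas 1).aestronglyMeasurable, HasFiniteIntegral.of_bounded (C := M) ?_⟩
    filter_upwards [hbdd 1 le_rfl] with ω h
    simpa [Real.norm_eq_abs] using h
  -- Strong law of large numbers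
  have hslln : ∀ᵐ ω ∂P, Tendsto
      (fun n : ℕ => (∑ i ∈ Finset.range n, R (i + 1) ω) / n) atTop (nhds μ) := by
    have h := strong_law_ae_real (μ := P) (fun i => R (i + 1)) hint
      (fun i j hij => hiid.indepFun (show i + 1 ≠ j + 1 by omega))
      (fun i => ⟨(hRmeas _).aemeasurable, (hRmeas 1).aemeasurable, hident (i + 1) (by omega)⟩)
    rw [hμ]
    exact h
  -- sqrt n tends to infinity
  have hsqrt : Tendsto (fun n : ℕ => Real.sqrt n) atTop atTop := by
    have h : Tendsto Real.sqrt atTop atTop := by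
      rw [show Real.sqrt = fun x : ℝ => x ^ (1/2 : ℝ) from funext fun x => Real.sqrt_eq_rpow x]
      exact tendsto_rpow_atTop (by norm_num)
    exact h.comp tendsto_natCast_atTop_atTop
  -- a.e. divergence of the lower-bound sequence
  have hdiv : ∀ᵐ ω ∂P, Tendsto (fun n : ℕ => lam * μ / (1 - lam) +
      Real.sqrt n * ((∑ i ∈ Finset.range n, R (i + 1) ω) / n / σ)) atTop atTop := by
    filter_upwards [hslln] with ω hω
    have hmul := hsqrt.atTop_mul_pos (div_pos hμpos hσ) (hω.div_const σ)
    exact tendsto_atTop_add_const_left atTop _ hmul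
  -- key algebraic identity
  have key : ∀ ω : Ω, ∀ n : ℕ, 1 ≤ n →
      lam * μ / (1 - lam) + Real.sqrt n * ((∑ i ∈ Finset.range n, R (i + 1) ω) / n / σ)
        = (n : ℝ) * (lam * μ / ((1 - lam) * n)) +
            (∑ i ∈ Finset.range n, R (i + 1) ω) / (Real.sqrt n * σ) := by
    intro ω n hn
    have hn0 : (0 : ℝ) < n := by exact_mod_cast hn
    have hsp : (0 : ℝ) < Real.sqrt n := Real.sqrt_pos.mpr hn0
    set s := Real.sqrt (n : ℝ) with hsdef
    have hs : (n : ℝ) = s * s := (Real.mul_self_sqrt hn0.le).symm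
    rw [hs]
    field_simp
  -- a.e. eventual lower bounds
  have hlimstar : ∀ᵐ ω ∂P, ∀ᶠ n : ℕ in atTop,
      (ω ∈ {ω | z < |Tstar R lam μ σ n ξ n ω|} ↔ ω ∈ (Set.univ : Set Ω)) := by
    filter_upwards [hdiv] with ω hω
    filter_upwards [hω.eventually_gt_atTop z, eventually_ge_atTop 1] with n hzn hn
    simp only [Set.mem_setOf_eq, Set.mem_univ, iff_true]
    calc z < lam * μ / (1 - lam) +
          Real.sqrt n * ((∑ i ∈ Finset.range n, R (i + 1) ω) / n / σ) := hzn
      _ = (n : ℝ) * (lam * μ / ((1 - lam) * n)) +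
            (∑ i ∈ Finset.range n, R (i + 1) ω) / (Real.sqrt n * σ) := key ω n hn
      _ ≤ |Tstar R lam μ σ n ξ n ω| := Tstar_lb R lam μ σ n ξ hξvals n ω
  have hlimstat : ∀ᵐ ω ∂P, ∀ᶠ n : ℕ in atTop,
      (ω ∈ {ω | z < |Tstat R lam μ σ n (fun _ _ => (1:ℝ)) n ω|} ↔ ω ∈ (Set.univ : Set Ω)) := by
    filter_upwards [hdiv] with ω hω
    filter_upwards [hω.eventually_gt_atTop z, eventually_ge_atTop 1] with n hzn hn
    simp only [Set.mem_setOf_eq, Set.mem_univ, iff_true]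
    calc z < lam * μ / (1 - lam) +
          Real.sqrt n * ((∑ i ∈ Finset.range n, R (i + 1) ω) / n / σ) := hzn
      _ = (n : ℝ) * (lam * μ / ((1 - lam) * n)) +
            (∑ i ∈ Finset.range n, R (i + 1) ω) / (Real.sqrt n * σ) := key ω n hn
      _ = Tstat R lam μ σ n (fun _ _ => (1:ℝ)) n ω := (Tstat_const_one R lam μ σ n n ω).symm
      _ ≤ |Tstat R lam μ σ n (fun _ _ => (1:ℝ)) n ω| := le_abs_self _
  -- convergence of the Tstar probabilities
  have hstar : Tendsto (fun n : ℕ => (P {ω | z < |Tstar R lam μ σ n ξ n ω|}).toReal)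
      atTop (nhds 1) := by
    have h := tendsto_measure_of_ae_tendsto_indicator_of_isFiniteMeasure (μ := P) atTop
      MeasurableSet.univ
      (fun n => measurableSet_lt measurable_const (Tstar_meas R lam μ σ n ξ hξmeas hRmeas n).abs)
      hlimstar
    rw [measure_univ] at h
    have h2 := (ENNReal.tendsto_toReal ENNReal.one_ne_top).comp h
    simpa [Function.comp_def] using h2
  have hstatc : Tendsto
      (fun n : ℕ => (P {ω | z < |Tstat R lam μ σ n (fun _ _ => (1:ℝ)) n ω|}).toReal)
      atTop (nhds 1) := by
    have h := tendsto_measure_of_ae_tendsto_indicator_of_isFiniteMeasure (μ := P) atTop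
      MeasurableSet.univ
      (fun n => measurableSet_lt measurable_const
        (Tstat_meas R lam μ σ n _ (fun _ => measurable_const) hRmeas n).abs)
      hlimstat
    rw [measure_univ] at h
    have h2 := (ENNReal.tendsto_toReal ENNReal.one_ne_top).comp h
    simpa [Function.comp_def] using h2
  -- the constant policy
  let θ0 : Policy P R :=
    { ϑ := fun _ _ => 1
      meas := fun _ => measurable_const
      vals := fun _ _ => Or.inr rfl
      indep_first := indepFun_const_left P 1 _
      adapted := fun _ _ => measurable_const }
  haveI : Nonempty (Policy P R) := ⟨θ0⟩
  have hub : ∀ n : ℕ, ∀ θ : Policy P R,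
      (P {ω | z < |Tstat R lam μ σ n θ.ϑ n ω|}).toReal ≤ 1 := by
    intro n θ
    rw [show (1 : ℝ) = (1 : ENNReal).toReal by simp]
    exact ENNReal.toReal_mono ENNReal.one_ne_top prob_le_one
  refine ⟨hstar, ?_⟩
  refine tendsto_of_tendsto_of_tendsto_of_le_of_le hstatc tendsto_const_nhds ?_ ?_
  · intro n
    exact le_ciSup (f := fun θ : Policy P R =>
        (P {ω | z < |Tstat R lam μ σ n θ.ϑ n ω|}).toReal)
      ⟨1, by rintro x ⟨θ, rfl⟩; exact hub n θ⟩ θ0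
  · intro n
    exact ciSup_le fun θ => hub n θ
end

section
/- For every ω ∈ ℝ, σ₀ > 0 and a ≥ 0, the tail mass of the bandit (spike) density satisfies ∫_{{y ∈ ℝ : |y| > a}} f^{ω,σ₀}(y) dy = Φ((ω − a)/σ₀) + exp(2ωa/σ₀²)·Φ(−(ω + a)/σ₀). -/
open MeasureTheory ProbabilityTheory Filter

/-- The bandit (spike) density `f^{ω,σ₀}`. -/
noncomputable def spikeDensity (w s0 y : ℝ) : ℝ :=
  (1 / (Real.sqrt (2 * Real.pi) * s0)) * Real.exp (-(|y| - w) ^ 2 / (2 * s0 ^ 2))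
    - (w / s0 ^ 2) * Real.exp (2 * w * |y| / s0 ^ 2) * stdNormalCDF (-(|y| + w) / s0)

open Set Topology

/-- The standard normal density. -/
noncomputable def gauss (t : ℝ) : ℝ := (1 / Real.sqrt (2 * Real.pi)) * Real.exp (-(t ^ 2) / 2)

lemma gauss_nonneg (t : ℝ) : 0 ≤ gauss t := by
  unfold gauss; positivity

lemma gauss_continuous : Continuous gauss := by
  unfold gauss; fun_prop

lemma integrable_exp_quad (b c d : ℝ) (hb : 0 < b) :
    Integrable (fun y : ℝ => Real.exp (c * y + d - b * y ^ 2)) := by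
  have h : (fun y : ℝ => Real.exp (c * y + d - b * y ^ 2))
      = fun y => Real.exp (d + c ^ 2 / (4 * b)) * Real.exp (-b * (y - c / (2 * b)) ^ 2) := by
    funext y
    rw [← Real.exp_add]
    congr 1
    field_simp
    ring
  rw [h]
  exact ((integrable_exp_neg_mul_sq hb).comp_sub_right _).const_mul _

lemma gauss_integrable : Integrable gauss := by
  have h := (integrable_exp_quad (1/2) 0 0 (by norm_num)).const_mul (1 / Real.sqrt (2 * Real.pi))
  refine h.congr (Filter.Eventually.of_forall fun y => ?_)
  unfold gauss
  ring_nf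

lemma gauss_integral : ∫ t, gauss t = 1 := by
  have h : (fun t : ℝ => gauss t)
      = fun t => (1 / Real.sqrt (2 * Real.pi)) * Real.exp (-(1/2) * t ^ 2) := by
    funext t; unfold gauss; ring_nf
  rw [h, MeasureTheory.integral_const_mul, integral_gaussian,
    show Real.pi / (1/2) = 2 * Real.pi by ring]
  rw [one_div, inv_mul_cancel₀ (ne_of_gt (Real.sqrt_pos.mpr (by positivity)))]

lemma cdf_nonneg (x : ℝ) : 0 ≤ stdNormalCDF x :=
  setIntegral_nonneg measurableSet_Iic fun t _ => gauss_nonneg t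

lemma cdf_eq (x : ℝ) : stdNormalCDF x = ∫ t in Set.Iic x, gauss t := rfl

lemma cdf_le (l x : ℝ) (hl : 0 ≤ l) :
    stdNormalCDF x ≤ Real.exp (l * x + l ^ 2 / 2) := by
  have hint : Integrable (fun t : ℝ => Real.exp (l * (x - t)) * gauss t) := by
    have heq : (fun t : ℝ => Real.exp (l * (x - t)) * gauss t)
        = fun t => 1 / Real.sqrt (2 * Real.pi) * Real.exp (-l * t + l * x - 1/2 * t ^ 2) := by
      funext t
      unfold gauss
      rw [mul_left_comm, ← Real.exp_add]
      congr 2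
      ring
    rw [heq]
    exact (integrable_exp_quad (1/2) (-l) (l * x) (by norm_num)).const_mul _
  have h1 : stdNormalCDF x ≤ ∫ t in Set.Iic x, Real.exp (l * (x - t)) * gauss t := by
    rw [cdf_eq]
    refine setIntegral_mono_on gauss_integrable.integrableOn hint.integrableOn
      measurableSet_Iic fun t ht => ?_
    have h2 : (1:ℝ) ≤ Real.exp (l * (x - t)) :=
      Real.one_le_exp (mul_nonneg hl (sub_nonneg.mpr ht))
    nlinarith [gauss_nonneg t]
  have h2 : (∫ t in Set.Iic x, Real.exp (l * (x - t)) * gauss t)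
      ≤ ∫ t, Real.exp (l * (x - t)) * gauss t :=
    setIntegral_le_integral hint (Filter.Eventually.of_forall fun t => by
      have := gauss_nonneg t; positivity)
  have h3 : (∫ t, Real.exp (l * (x - t)) * gauss t) = Real.exp (l * x + l ^ 2 / 2) := by
    have h : (fun t : ℝ => Real.exp (l * (x - t)) * gauss t)
        = fun t => Real.exp (l * x + l ^ 2 / 2) * gauss (t + l) := by
      funext t
      unfold gauss
      rw [mul_left_comm, ← Real.exp_add]
      rw [mul_left_comm, ← Real.exp_add]
      congr 2
      ring
    rw [h, MeasureTheory.integral_const_mul, integral_add_right_eq_self gauss l, gauss_integral,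
      mul_one]
  linarith

lemma cdf_hasDerivAt (x : ℝ) : HasDerivAt stdNormalCDF (gauss x) x := by
  have heq : stdNormalCDF = fun y => stdNormalCDF 0 + ∫ t in (0:ℝ)..y, gauss t := by
    funext y
    have h := intervalIntegral.integral_Iic_sub_Iic (μ := volume) (f := gauss)
      gauss_integrable.integrableOn gauss_integrable.integrableOn (a := 0) (b := y)
    rw [cdf_eq, cdf_eq, ← h]
    ring
  rw [heq]
  have hd : HasDerivAt (fun y => ∫ t in (0:ℝ)..y, gauss t) (gauss x) x :=
    intervalIntegral.integral_hasDerivAt_right gauss_integrable.intervalIntegrable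
      (gauss_continuous.stronglyMeasurableAtFilter _ _) gauss_continuous.continuousAt
  exact hd.const_add _

lemma cdf_continuous : Continuous stdNormalCDF :=
  continuous_iff_continuousAt.mpr fun x => (cdf_hasDerivAt x).continuousAt

/-- The spike density on the positive half-line (with `|y|` replaced by `y`). -/
noncomputable def spikePos (w s0 y : ℝ) : ℝ :=
  (1 / (Real.sqrt (2 * Real.pi) * s0)) * Real.exp (-(y - w) ^ 2 / (2 * s0 ^ 2))
    - (w / s0 ^ 2) * Real.exp (2 * w * y / s0 ^ 2) * stdNormalCDF (-(y + w) / s0)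

/-- An antiderivative of `spikePos`. -/
noncomputable def anti (w s0 y : ℝ) : ℝ :=
  -(1/2) * (stdNormalCDF ((w - y) / s0)
    + Real.exp (2 * w * y / s0 ^ 2) * stdNormalCDF (-(y + w) / s0))

lemma anti_hasDerivAt (w s0 : ℝ) (hs0 : 0 < s0) (y : ℝ) :
    HasDerivAt (anti w s0) (spikePos w s0 y) y := by
  have hs0' : s0 ≠ 0 := ne_of_gt hs0
  have h1 : HasDerivAt (fun y : ℝ => (w - y) / s0) (-1 / s0) y := by
    simpa using ((hasDerivAt_id y).const_sub w).div_const s0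
  have hA : HasDerivAt (fun y : ℝ => stdNormalCDF ((w - y) / s0))
      (gauss ((w - y) / s0) * (-1 / s0)) y := (cdf_hasDerivAt _).comp y h1
  have h2 : HasDerivAt (fun y : ℝ => 2 * w * y / s0 ^ 2) (2 * w / s0 ^ 2) y := by
    simpa using ((hasDerivAt_id y).const_mul (2 * w)).div_const (s0 ^ 2)
  have hE : HasDerivAt (fun y : ℝ => Real.exp (2 * w * y / s0 ^ 2))
      (Real.exp (2 * w * y / s0 ^ 2) * (2 * w / s0 ^ 2)) y :=
    (Real.hasDerivAt_exp _).comp y h2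
  have h3 : HasDerivAt (fun y : ℝ => -(y + w) / s0) (-1 / s0) y := by
    simpa using (((hasDerivAt_id y).add_const w).neg).div_const s0
  have hC : HasDerivAt (fun y : ℝ => stdNormalCDF (-(y + w) / s0))
      (gauss (-(y + w) / s0) * (-1 / s0)) y := (cdf_hasDerivAt _).comp y h3
  have hg := (hA.add (hE.mul hC)).const_mul (-(1/2) : ℝ)
  refine hg.congr_deriv ?_
  symm
  have hsqrt : (0:ℝ) < Real.sqrt (2 * Real.pi) := Real.sqrt_pos.mpr (by positivity)
  have hP : Real.exp (2 * w * y / s0 ^ 2) ≠ 0 := Real.exp_ne_zero _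
  have f1 : gauss ((w - y) / s0)
      = (1 / Real.sqrt (2 * Real.pi)) * Real.exp (-(y - w) ^ 2 / (2 * s0 ^ 2)) := by
    unfold gauss
    congr 1
    field_simp
    ring
  have f2 : gauss (-(y + w) / s0)
      = (1 / Real.sqrt (2 * Real.pi)) * Real.exp (-(y - w) ^ 2 / (2 * s0 ^ 2))
        / Real.exp (2 * w * y / s0 ^ 2) := by
    unfold gauss
    rw [eq_div_iff hP, mul_assoc, ← Real.exp_add]
    congr 2
    field_simp
    ring
  unfold spikePos
  rw [f1, f2]
  field_simp
  ring

section helpers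
variable {w s0 : ℝ}

lemma kappa_neg (hs0 : 0 < s0) : (2 * w - (2 * |w| / s0 + s0) * s0) / s0 ^ 2 < 0 := by
  apply div_neg_of_neg_of_pos _ (by positivity)
  have h1 : (2 * |w| / s0 + s0) * s0 = 2 * |w| + s0 ^ 2 := by
    field_simp
  rw [h1]
  have := le_abs_self w
  nlinarith

lemma B_bound (hs0 : 0 < s0) (y : ℝ) :
    Real.exp (2 * w * y / s0 ^ 2) * stdNormalCDF (-(y + w) / s0)
      ≤ Real.exp ((2 * w - (2 * |w| / s0 + s0) * s0) / s0 ^ 2 * y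
          + (-((2 * |w| / s0 + s0) * w) / s0 + (2 * |w| / s0 + s0) ^ 2 / 2)) := by
  set l : ℝ := 2 * |w| / s0 + s0 with hl
  have hlpos : 0 < l := by positivity
  have h := cdf_le l (-(y + w) / s0) hlpos.le
  calc Real.exp (2 * w * y / s0 ^ 2) * stdNormalCDF (-(y + w) / s0)
      ≤ Real.exp (2 * w * y / s0 ^ 2) * Real.exp (l * (-(y + w) / s0) + l ^ 2 / 2) :=
        mul_le_mul_of_nonneg_left h (Real.exp_pos _).le
    _ = _ := by
        rw [← Real.exp_add]
        congr 1
        field_simp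
        ring

lemma A_bound (hs0 : 0 < s0) (y : ℝ) :
    stdNormalCDF ((w - y) / s0) ≤ Real.exp ((-1) * y + (w + s0 ^ 2 / 2)) := by
  have h := cdf_le s0 ((w - y) / s0) hs0.le
  refine h.trans (le_of_eq ?_)
  congr 1
  field_simp
  ring

lemma tendsto_exp_lin {κ : ℝ} (C : ℝ) (hκ : κ < 0) :
    Tendsto (fun y : ℝ => Real.exp (κ * y + C)) atTop (𝓝 0) := by
  apply Real.tendsto_exp_atBot.comp
  apply tendsto_atBot_add_const_right
  exact Tendsto.const_mul_atTop_of_neg hκ tendsto_id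

lemma anti_tendsto (hs0 : 0 < s0) : Tendsto (anti w s0) atTop (𝓝 (0 : ℝ)) := by
  have hA : Tendsto (fun y : ℝ => stdNormalCDF ((w - y) / s0)) atTop (𝓝 0) :=
    squeeze_zero (fun y => cdf_nonneg _) (fun y => A_bound hs0 y)
      (tendsto_exp_lin _ (by norm_num))
  have hB : Tendsto (fun y : ℝ => Real.exp (2 * w * y / s0 ^ 2)
      * stdNormalCDF (-(y + w) / s0)) atTop (𝓝 0) :=
    squeeze_zero (fun y => mul_nonneg (Real.exp_pos _).le (cdf_nonneg _))
      (fun y => B_bound hs0 y) (tendsto_exp_lin _ (kappa_neg hs0))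
  have h := (hA.add hB).const_mul (-(1/2) : ℝ)
  rw [show (-(1/2) : ℝ) * (0 + 0) = 0 by norm_num] at h
  exact h

lemma spikePos_integrableOn (a : ℝ) (hs0 : 0 < s0) :
    IntegrableOn (spikePos w s0) (Set.Ioi a) := by
  obtain ⟨κ, C, hκ, hbd2⟩ : ∃ κ C : ℝ, κ < 0 ∧ ∀ y : ℝ,
      Real.exp (2 * w * y / s0 ^ 2) * stdNormalCDF (-(y + w) / s0) ≤ Real.exp (κ * y + C) :=
    ⟨_, _, kappa_neg hs0, fun y => B_bound hs0 y⟩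
  have hT1 : Integrable (fun y : ℝ =>
      (1 / (Real.sqrt (2 * Real.pi) * s0)) * Real.exp (-(y - w) ^ 2 / (2 * s0 ^ 2))) := by
    have heq : (fun y : ℝ =>
        (1 / (Real.sqrt (2 * Real.pi) * s0)) * Real.exp (-(y - w) ^ 2 / (2 * s0 ^ 2)))
        = fun y => (1 / (Real.sqrt (2 * Real.pi) * s0)) *
            Real.exp ((w / s0 ^ 2) * y + (-(w ^ 2) / (2 * s0 ^ 2)) - (1 / (2 * s0 ^ 2)) * y ^ 2) := by
      funext y
      congr 1
      field_simp
      ring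
    rw [heq]
    exact (integrable_exp_quad _ _ _ (by positivity)).const_mul _
  have hbd : IntegrableOn (fun y : ℝ => |w| / s0 ^ 2 * Real.exp (κ * y + C)) (Set.Ioi a) := by
    have h := (exp_neg_integrableOn_Ioi a (show (0:ℝ) < -κ by linarith)).const_mul
      (|w| / s0 ^ 2 * Real.exp C)
    refine h.congr (Filter.Eventually.of_forall fun y => ?_)
    show |w| / s0 ^ 2 * Real.exp C * Real.exp (-(-κ) * y) = _
    rw [mul_assoc, ← Real.exp_add]
    ring_nf
  have hT2 : IntegrableOn (fun y : ℝ =>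
      (w / s0 ^ 2) * Real.exp (2 * w * y / s0 ^ 2) * stdNormalCDF (-(y + w) / s0))
      (Set.Ioi a) := by
    refine Integrable.mono hbd ?_ ?_
    · refine Continuous.aestronglyMeasurable ?_
      have c1 : Continuous fun y : ℝ => 2 * w * y / s0 ^ 2 := by fun_prop
      have c2 : Continuous fun y : ℝ => -(y + w) / s0 := by fun_prop
      exact (continuous_const.mul (Real.continuous_exp.comp c1)).mul
        (cdf_continuous.comp c2)
    · refine Filter.Eventually.of_forall fun y => ?_
      rw [Real.norm_eq_abs, Real.norm_eq_abs,
        abs_of_nonneg (show (0:ℝ) ≤ |w| / s0 ^ 2 * Real.exp (κ * y + C) by positivity),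
        abs_mul, abs_mul, abs_of_nonneg (Real.exp_pos _).le, abs_of_nonneg (cdf_nonneg _),
        abs_div, abs_of_nonneg (show (0:ℝ) ≤ s0 ^ 2 by positivity), mul_assoc]
      exact mul_le_mul_of_nonneg_left (hbd2 y) (by positivity)
  exact hT1.integrableOn.sub hT2

lemma integral_Ioi_spike {a : ℝ} (hs0 : 0 < s0) (ha : 0 ≤ a) :
    ∫ y in Set.Ioi a, spikeDensity w s0 y
      = (1/2) * (stdNormalCDF ((w - a) / s0)
          + Real.exp (2 * w * a / s0 ^ 2) * stdNormalCDF (-(a + w) / s0)) := by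
  have hEq : EqOn (spikeDensity w s0) (spikePos w s0) (Set.Ioi a) := fun y hy => by
    unfold spikeDensity spikePos
    rw [abs_of_pos (lt_of_le_of_lt ha hy)]
  rw [setIntegral_congr_fun measurableSet_Ioi hEq]
  have hFTC := integral_Ioi_of_hasDerivAt_of_tendsto
    ((anti_hasDerivAt w s0 hs0 a).continuousAt.continuousWithinAt)
    (fun x _ => anti_hasDerivAt w s0 hs0 x)
    (spikePos_integrableOn a hs0)
    (anti_tendsto hs0)
  rw [hFTC]
  unfold anti
  ring

end helpers

/-- the tail mass of the bandit (spike) density: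
`∫_{|y| > a} f^{ω,σ₀}(y) dy = Φ((ω-a)/σ₀) + exp(2ωa/σ₀²) Φ(-(ω+a)/σ₀)`. -/
theorem stmt17 (w s0 a : ℝ) (hs0 : 0 < s0) (ha : 0 ≤ a) :
    ∫ y in {y : ℝ | a < |y|}, spikeDensity w s0 y =
      stdNormalCDF ((w - a) / s0) +
        Real.exp (2 * w * a / s0 ^ 2) * stdNormalCDF (-(w + a) / s0) := by
  have heven : ∀ y : ℝ, spikeDensity w s0 (-y) = spikeDensity w s0 y := fun y => by
    unfold spikeDensity; rw [abs_neg]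
  have hset : {y : ℝ | a < |y|} = Set.Iio (-a) ∪ Set.Ioi a := by
    ext y
    simp only [Set.mem_setOf_eq, lt_abs, Set.mem_union, Set.mem_Iio, Set.mem_Ioi, lt_neg]
    exact or_comm
  have hEq : Set.EqOn (spikeDensity w s0) (spikePos w s0) (Set.Ioi a) := fun y hy => by
    unfold spikeDensity spikePos
    rw [abs_of_pos (lt_of_le_of_lt ha hy)]
  have hIoi_int : IntegrableOn (spikeDensity w s0) (Set.Ioi a) :=
    (spikePos_integrableOn a hs0).congr_fun hEq.symm measurableSet_Ioi
  have hmap : (volume.restrict (Set.Iio (-a))).map Neg.neg = volume.restrict (Set.Ioi a) := by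
    conv_rhs => rw [← Measure.map_neg_eq_self (volume : Measure ℝ),
      measurableEmbedding_neg.restrict_map]
    congr 1
    ext y
    simp [lt_neg]
  have hIio_int : IntegrableOn (spikeDensity w s0) (Set.Iio (-a)) := by
    have h1 := hIoi_int
    rw [IntegrableOn, ← hmap, measurableEmbedding_neg.integrable_map_iff] at h1
    have h2 : spikeDensity w s0 ∘ Neg.neg = spikeDensity w s0 := funext heven
    rwa [h2] at h1
  have hIio_val : ∫ y in Set.Iio (-a), spikeDensity w s0 y
      = ∫ y in Set.Ioi a, spikeDensity w s0 y := by
    calc ∫ y in Set.Iio (-a), spikeDensity w s0 y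
        = ∫ y in Set.Iic (-a), spikeDensity w s0 y := setIntegral_congr_set Iio_ae_eq_Iic
      _ = ∫ y in Set.Ioi a, spikeDensity w s0 (-y) := (integral_comp_neg_Ioi a (fun y => spikeDensity w s0 y)).symm
      _ = ∫ y in Set.Ioi a, spikeDensity w s0 y := by simp only [heven]
  have hdisj : Disjoint (Set.Iio (-a)) (Set.Ioi a) :=
    (Set.Iio_disjoint_Ici (by linarith : -a ≤ a)).mono_right Set.Ioi_subset_Ici_self
  rw [hset, setIntegral_union hdisj measurableSet_Ioi hIio_int hIoi_int, hIio_val,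
    integral_Ioi_spike hs0 ha, show -(a + w) = -(w + a) by ring]
  ring
end

section
/- Let φ : ℝ → ℝ be bounded, continuous and even, and for h > 0 define the Gaussian mollification φ_h(x) = ∫_ℝ (1/√(2π))·φ(x + hy)·exp(−y²/2) dy. Then φ_h is even and differentiable on ℝ, its derivative satisfies φ_h′(x) = ∫_0^∞ (1/(√(2π)·h³))·(φ(y + x) − φ(y − x))·y·exp(−y²/(2h²)) dy for every x ∈ ℝ, and if in addition φ is strictly decreasing on (0, ∞), then sgn(φ_h′(x)) = −sgn(x) for every x ∈ ℝ. -/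
open MeasureTheory ProbabilityTheory Filter

lemma aux19_int1 {ψ : ℝ → ℝ} (hψ : Continuous ψ) {B : ℝ} (hB : ∀ u, |ψ u| ≤ B)
    {b : ℝ} (hb : 0 < b) (a : ℝ) :
    Integrable (fun u : ℝ => ψ u * Real.exp (-b * (u - a) ^ 2)) := by
  have hg : Integrable (fun u : ℝ => Real.exp (-b * (u - a) ^ 2)) :=
    (integrable_exp_neg_mul_sq hb).comp_sub_right a
  refine (hg.const_mul B).mono' ?_ ?_
  · exact (hψ.mul (by fun_prop)).aestronglyMeasurable
  · filter_upwards with u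
    simp only [norm_mul, Real.norm_eq_abs, Real.abs_exp]
    exact mul_le_mul_of_nonneg_right (hB u) (Real.exp_pos _).le

lemma aux19_int2 {ψ : ℝ → ℝ} (hψ : Continuous ψ) {B : ℝ} (hB : ∀ u, |ψ u| ≤ B)
    {b : ℝ} (hb : 0 < b) (a : ℝ) :
    Integrable (fun u : ℝ => ψ u * ((u - a) * Real.exp (-b * (u - a) ^ 2))) := by
  have hg : Integrable (fun u : ℝ => (u - a) * Real.exp (-b * (u - a) ^ 2)) :=
    (integrable_mul_exp_neg_mul_sq hb).comp_sub_right a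
  refine (hg.abs.const_mul B).mono' ?_ ?_
  · exact (hψ.mul (by fun_prop)).aestronglyMeasurable
  · filter_upwards with u
    simp only [norm_mul, Real.norm_eq_abs, abs_mul]
    exact mul_le_mul_of_nonneg_right (hB u) (by positivity)

lemma aux19_int2' {ψ : ℝ → ℝ} (hψ : Continuous ψ) {B : ℝ} (hB : ∀ u, |ψ u| ≤ B)
    {b : ℝ} (hb : 0 < b) :
    Integrable (fun u : ℝ => ψ u * (u * Real.exp (-b * u ^ 2))) := by
  simpa using aux19_int2 hψ hB hb 0

/-- the Gaussian mollification `φ_h` of a bounded continuous even `φ` is even and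
differentiable, its derivative has the stated integral form, and if `φ` is strictly decreasing on
`(0,∞)` then `sgn(φ_h′(x)) = -sgn(x)` for all `x`. -/
theorem stmt19 (φ : ℝ → ℝ) (hb : ∃ B : ℝ, ∀ x, |φ x| ≤ B) (hc : Continuous φ)
    (he : ∀ x, φ (-x) = φ x) (h : ℝ) (hh : 0 < h)
    (φh : ℝ → ℝ)
    (hφh : ∀ x, φh x =
      ∫ y, (1 / Real.sqrt (2 * Real.pi)) * φ (x + h * y) * Real.exp (-(y ^ 2) / 2)) :
    (∀ x, φh (-x) = φh x) ∧
      Differentiable ℝ φh ∧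
      (∀ x, deriv φh x =
        ∫ y in Set.Ioi (0 : ℝ),
          (1 / (Real.sqrt (2 * Real.pi) * h ^ 3)) * (φ (y + x) - φ (y - x)) * y *
            Real.exp (-(y ^ 2) / (2 * h ^ 2))) ∧
      (StrictAntiOn φ (Set.Ioi 0) → ∀ x, Real.sign (deriv φh x) = - Real.sign x) := by
  obtain ⟨B, hB⟩ := hb
  have hB0 : 0 ≤ B := le_trans (abs_nonneg _) (hB 0)
  have hs0 : (0:ℝ) < Real.sqrt (2 * Real.pi) := Real.sqrt_pos.mpr (by positivity)
  have hsne : Real.sqrt (2 * Real.pi) ≠ 0 := hs0.ne'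
  have hhne : h ≠ 0 := hh.ne'
  set b : ℝ := 1 / (2 * h ^ 2) with hbdef
  have hbpos : 0 < b := by positivity
  set F : ℝ → ℝ → ℝ := fun x u =>
    (1 / (Real.sqrt (2 * Real.pi) * h) * φ u) * Real.exp (-b * (u - x) ^ 2) with hF
  set F' : ℝ → ℝ → ℝ := fun x u =>
    (1 / (Real.sqrt (2 * Real.pi) * h ^ 3) * φ u) * ((u - x) * Real.exp (-b * (u - x) ^ 2))
    with hF'
  -- part 1 : evenness
  have heven : ∀ x, φh (-x) = φh x := by
    intro x
    rw [hφh, hφh, ← MeasureTheory.integral_neg_eq_self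
      (fun y => 1 / Real.sqrt (2 * Real.pi) * φ (-x + h * y) * Real.exp (-(y ^ 2) / 2))]
    congr 1; funext y
    rw [show -x + h * -y = -(x + h * y) by ring, he, neg_sq]
  -- representation φh x = ∫ u, F x u
  have hrep : ∀ x, φh x = ∫ u, F x u := by
    intro x
    rw [hφh]
    have e1 : (fun y : ℝ => 1 / Real.sqrt (2 * Real.pi) * φ (x + h * y) * Real.exp (-(y ^ 2) / 2))
        = fun y => (fun t : ℝ =>
            1 / Real.sqrt (2 * Real.pi) * φ (x + t) * Real.exp (-b * t ^ 2)) (h * y) := by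
      funext y
      simp only
      rw [show -b * (h * y) ^ 2 = -(y ^ 2) / 2 by rw [hbdef]; field_simp]
    rw [e1, MeasureTheory.Measure.integral_comp_mul_left
      (fun t : ℝ => 1 / Real.sqrt (2 * Real.pi) * φ (x + t) * Real.exp (-b * t ^ 2)) h]
    have e2 : (fun t : ℝ => 1 / Real.sqrt (2 * Real.pi) * φ (x + t) * Real.exp (-b * t ^ 2))
        = fun t => (fun u : ℝ =>
            1 / Real.sqrt (2 * Real.pi) * φ u * Real.exp (-b * (u - x) ^ 2)) (x + t) := by
      funext t
      simp [add_sub_cancel_left]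
    rw [e2, MeasureTheory.integral_add_left_eq_self
      (fun u : ℝ => 1 / Real.sqrt (2 * Real.pi) * φ u * Real.exp (-b * (u - x) ^ 2)) x,
      ← integral_smul]
    congr 1; funext u
    rw [hF]
    simp only [smul_eq_mul]
    rw [abs_of_pos (inv_pos.mpr hh)]
    ring
  -- the derivative via dominated convergence
  have hDF : ∀ x₀ : ℝ, HasDerivAt φh (∫ u, F' x₀ u) x₀ := by
    intro x₀
    have key1 : ∀ t : ℝ, |t| * Real.exp (-b * t ^ 2)
        ≤ (2 * h) * Real.exp (-(1 / (4 * h ^ 2)) * t ^ 2) := by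
      intro t
      have h1 : 2 * h * |t| ≤ t ^ 2 + 4 * h ^ 2 := by
        nlinarith [sq_abs t, sq_nonneg (|t| - h), hh, abs_nonneg t]
      have h2 : |t| ≤ 2 * h * (t ^ 2 / (4 * h ^ 2) + 1) := by
        rw [← sub_nonneg]
        have e : 2 * h * (t ^ 2 / (4 * h ^ 2) + 1) - |t|
            = (t ^ 2 + 4 * h ^ 2 - 2 * h * |t|) / (2 * h) := by field_simp; ring
        rw [e]
        exact div_nonneg (by linarith) (by positivity)
      have h3 : t ^ 2 / (4 * h ^ 2) + 1 ≤ Real.exp (t ^ 2 / (4 * h ^ 2)) :=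
        Real.add_one_le_exp _
      have h4 : |t| ≤ 2 * h * Real.exp (t ^ 2 / (4 * h ^ 2)) :=
        h2.trans (mul_le_mul_of_nonneg_left h3 (by positivity))
      calc |t| * Real.exp (-b * t ^ 2)
          ≤ (2 * h * Real.exp (t ^ 2 / (4 * h ^ 2))) * Real.exp (-b * t ^ 2) :=
            mul_le_mul_of_nonneg_right h4 (Real.exp_pos _).le
        _ = (2 * h) * Real.exp (-(1 / (4 * h ^ 2)) * t ^ 2) := by
            rw [mul_assoc, ← Real.exp_add]
            congr 2
            rw [hbdef]; field_simp; ring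
    have hbound := hasDerivAt_integral_of_dominated_loc_of_deriv_le
      (μ := volume) (F := F) (F' := F') (x₀ := x₀)
      (bound := fun u => (B * (2 * h) * Real.exp (1 / (4 * h ^ 2))
        / (Real.sqrt (2 * Real.pi) * h ^ 3)) * Real.exp (-(1 / (8 * h ^ 2)) * (u - x₀) ^ 2))
      (Metric.ball_mem_nhds x₀ one_pos)
      (Eventually.of_forall fun x => Continuous.aestronglyMeasurable (by fun_prop))
      ?_ (Continuous.aestronglyMeasurable (by fun_prop)) ?_ ?_ ?_
    · have hrepf : φh = fun x => ∫ u, F x u := funext hrep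
      rw [hrepf]
      exact hbound.2
    · -- integrability of F x₀
      have hψc : Continuous fun u => 1 / (Real.sqrt (2 * Real.pi) * h) * φ u := by fun_prop
      have hψB : ∀ u, |1 / (Real.sqrt (2 * Real.pi) * h) * φ u|
          ≤ 1 / (Real.sqrt (2 * Real.pi) * h) * B := by
        intro u
        rw [abs_mul, abs_of_pos (by positivity : (0:ℝ) < 1 / (Real.sqrt (2 * Real.pi) * h))]
        exact mul_le_mul_of_nonneg_left (hB u) (by positivity)
      exact aux19_int1 hψc hψB hbpos x₀
    · -- the bound
      refine ae_of_all _ fun u x hx => ?_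
      have hd : |x - x₀| < 1 := by rw [← Real.dist_eq]; exact Metric.mem_ball.mp hx
      have hnorm : ‖F' x u‖ = (1 / (Real.sqrt (2 * Real.pi) * h ^ 3) * |φ u|)
          * (|u - x| * Real.exp (-b * (u - x) ^ 2)) := by
        rw [hF']
        simp only [Real.norm_eq_abs, abs_mul, Real.abs_exp]
        rw [abs_of_pos (by positivity : (0:ℝ) < 1 / (Real.sqrt (2 * Real.pi) * h ^ 3))]
      rw [hnorm]
      have step1 : (1 / (Real.sqrt (2 * Real.pi) * h ^ 3) * |φ u|)
          * (|u - x| * Real.exp (-b * (u - x) ^ 2))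
          ≤ (1 / (Real.sqrt (2 * Real.pi) * h ^ 3) * B)
          * ((2 * h) * Real.exp (-(1 / (4 * h ^ 2)) * (u - x) ^ 2)) :=
        mul_le_mul (mul_le_mul_of_nonneg_left (hB u) (by positivity)) (key1 (u - x))
          (by positivity) (by positivity)
      have step2 : Real.exp (-(1 / (4 * h ^ 2)) * (u - x) ^ 2)
          ≤ Real.exp (1 / (4 * h ^ 2)) * Real.exp (-(1 / (8 * h ^ 2)) * (u - x₀) ^ 2) := by
        rw [← Real.exp_add]
        apply Real.exp_le_exp.mpr
        have hx2 : (x - x₀) ^ 2 ≤ 1 := by nlinarith [sq_abs (x - x₀), abs_nonneg (x - x₀)]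
        have hnum : (u - x₀) ^ 2 ≤ 2 * (u - x) ^ 2 + 2 := by
          nlinarith [sq_nonneg ((u - x) - (x - x₀))]
        have e : (1 / (4 * h ^ 2) + -(1 / (8 * h ^ 2)) * (u - x₀) ^ 2)
            - (-(1 / (4 * h ^ 2)) * (u - x) ^ 2)
            = (2 - (u - x₀) ^ 2 + 2 * (u - x) ^ 2) / (8 * h ^ 2) := by field_simp; ring
        have hpos : 0 ≤ (2 - (u - x₀) ^ 2 + 2 * (u - x) ^ 2) / (8 * h ^ 2) :=
          div_nonneg (by linarith) (by positivity)
        linarith [e ▸ hpos]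
      calc (1 / (Real.sqrt (2 * Real.pi) * h ^ 3) * |φ u|)
          * (|u - x| * Real.exp (-b * (u - x) ^ 2))
          ≤ (1 / (Real.sqrt (2 * Real.pi) * h ^ 3) * B)
            * ((2 * h) * Real.exp (-(1 / (4 * h ^ 2)) * (u - x) ^ 2)) := step1
        _ ≤ (1 / (Real.sqrt (2 * Real.pi) * h ^ 3) * B)
            * ((2 * h) * (Real.exp (1 / (4 * h ^ 2))
              * Real.exp (-(1 / (8 * h ^ 2)) * (u - x₀) ^ 2))) := by
            refine mul_le_mul_of_nonneg_left ?_ (by positivity)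
            exact mul_le_mul_of_nonneg_left step2 (by positivity)
        _ = (B * (2 * h) * Real.exp (1 / (4 * h ^ 2))
            / (Real.sqrt (2 * Real.pi) * h ^ 3)) * Real.exp (-(1 / (8 * h ^ 2)) * (u - x₀) ^ 2) := by
            ring
    · -- bound is integrable
      exact ((integrable_exp_neg_mul_sq (by positivity : (0:ℝ) < 1 / (8 * h ^ 2))).comp_sub_right
        x₀).const_mul _
    · -- pointwise derivative
      refine ae_of_all _ fun u x _ => ?_
      have h2 : HasDerivAt (fun x : ℝ => u - x) (-1) x := by
        simpa using (hasDerivAt_id x).const_sub u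
      have h3 : HasDerivAt (fun x : ℝ => -b * (u - x) ^ 2) (-b * (2 * (u - x) * (-1))) x := by
        exact ((h2.pow 2).const_mul (-b)).congr_deriv (by ring)
      have h5 := (h3.exp).const_mul (1 / (Real.sqrt (2 * Real.pi) * h) * φ u)
      have e : (1 / (Real.sqrt (2 * Real.pi) * h) * φ u)
          * (Real.exp (-b * (u - x) ^ 2) * (-b * (2 * (u - x) * (-1)))) = F' x u := by
        rw [hF', hbdef]
        field_simp
      rw [e] at h5
      exact h5
  have hdiff : Differentiable ℝ φh := fun x => (hDF x).differentiableAt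
  have hderiv : ∀ x, deriv φh x = ∫ u, F' x u := fun x => (hDF x).deriv
  -- the half-line form of the derivative
  have hform : ∀ x, (∫ u, F' x u) =
      ∫ y in Set.Ioi (0 : ℝ),
        (1 / (Real.sqrt (2 * Real.pi) * h ^ 3)) * (φ (y + x) - φ (y - x)) * y *
          Real.exp (-(y ^ 2) / (2 * h ^ 2)) := by
    intro x
    have h1 : (∫ u, F' x u) = ∫ y, F' x (y + x) :=
      (MeasureTheory.integral_add_right_eq_self (fun u => F' x u) x).symm
    set G : ℝ → ℝ := fun y =>
      (1 / (Real.sqrt (2 * Real.pi) * h ^ 3) * φ (y + x)) * (y * Real.exp (-b * y ^ 2)) with hG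
    have h2 : (fun y => F' x (y + x)) = G := by
      funext y
      simp only [hF', hG, add_sub_cancel_right]
    have hGint : Integrable G := by
      rw [hG]
      refine aux19_int2' (by fun_prop) (B := 1 / (Real.sqrt (2 * Real.pi) * h ^ 3) * B) ?_ hbpos
      intro u
      rw [abs_mul, abs_of_pos (by positivity : (0:ℝ) < 1 / (Real.sqrt (2 * Real.pi) * h ^ 3))]
      exact mul_le_mul_of_nonneg_left (hB _) (by positivity)
    have hGnegint : Integrable (fun y => G (-y)) := hGint.comp_neg
    have h3 : (∫ y, G y) = (∫ y in Set.Iic 0, G y) + ∫ y in Set.Ioi 0, G y :=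
      (intervalIntegral.integral_Iic_add_Ioi hGint.integrableOn hGint.integrableOn).symm
    have h4 : (∫ y in Set.Iic (0:ℝ), G y) = ∫ y in Set.Ioi (0:ℝ), G (-y) := by
      rw [integral_comp_neg_Ioi, neg_zero]
    have h5 : (∫ y in Set.Ioi (0:ℝ), G (-y)) + (∫ y in Set.Ioi (0:ℝ), G y)
        = ∫ y in Set.Ioi (0:ℝ), (G (-y) + G y) :=
      (integral_add hGnegint.integrableOn hGint.integrableOn).symm
    have h6 : ∀ y : ℝ, G (-y) + G y =
        (1 / (Real.sqrt (2 * Real.pi) * h ^ 3)) * (φ (y + x) - φ (y - x)) * y *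
          Real.exp (-(y ^ 2) / (2 * h ^ 2)) := by
      intro y
      simp only [hG]
      rw [show -y + x = -(y - x) by ring, he, neg_sq,
        show -b * y ^ 2 = -(y ^ 2) / (2 * h ^ 2) by rw [hbdef]; field_simp]
      ring
    rw [h1, h2, h3, h4, h5]
    exact setIntegral_congr_fun measurableSet_Ioi fun y _ => h6 y
  have hpart3 : ∀ x, deriv φh x =
      ∫ y in Set.Ioi (0 : ℝ),
        (1 / (Real.sqrt (2 * Real.pi) * h ^ 3)) * (φ (y + x) - φ (y - x)) * y *
          Real.exp (-(y ^ 2) / (2 * h ^ 2)) := fun x => (hderiv x).trans (hform x)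
  refine ⟨heven, hdiff, hpart3, ?_⟩
  -- the sign statement
  intro hsa
  have phi0 : ∀ s : ℝ, 0 < s → φ s ≤ φ 0 := by
    intro s hs
    have ht : Filter.Tendsto φ (nhdsWithin 0 (Set.Ioi 0)) (nhds (φ 0)) :=
      (hc.tendsto 0).mono_left nhdsWithin_le_nhds
    refine ge_of_tendsto ht ?_
    filter_upwards [Ioo_mem_nhdsGT_of_mem (Set.mem_Ico.mpr ⟨le_refl 0, hs⟩)] with t htm
    exact (hsa (Set.mem_Ioi.mpr htm.1) (Set.mem_Ioi.mpr hs) htm.2).le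
  have hneg : ∀ x : ℝ, 0 < x → deriv φh x < 0 := by
    intro x hx
    have hlt : ∀ y : ℝ, 0 < y → y ≠ x → φ (y + x) < φ (y - x) := by
      intro y hy hyx
      rcases lt_or_gt_of_ne hyx with hlt' | hgt'
      · have e : φ (y - x) = φ (x - y) := by rw [← he (x - y), neg_sub]
        rw [e]
        exact hsa (Set.mem_Ioi.mpr (by linarith)) (Set.mem_Ioi.mpr (by linarith)) (by linarith)
      · exact hsa (Set.mem_Ioi.mpr (by linarith)) (Set.mem_Ioi.mpr (by linarith)) (by linarith)
    have hle : ∀ y : ℝ, 0 < y → φ (y + x) ≤ φ (y - x) := by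
      intro y hy
      rcases eq_or_ne y x with rfl | hyx
      · rw [sub_self]
        exact phi0 (y + y) (by linarith)
      · exact (hlt y hy hyx).le
    rw [hpart3 x]
    set J : ℝ → ℝ := fun y =>
      (1 / (Real.sqrt (2 * Real.pi) * h ^ 3)) * (φ (y + x) - φ (y - x)) * y *
        Real.exp (-(y ^ 2) / (2 * h ^ 2)) with hJ
    have hJint : IntegrableOn J (Set.Ioi 0) := by
      have hint : Integrable (fun y : ℝ =>
          (1 / (Real.sqrt (2 * Real.pi) * h ^ 3) * (φ (y + x) - φ (y - x)))
            * (y * Real.exp (-b * y ^ 2))) := by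
        refine aux19_int2' (by fun_prop)
          (B := 1 / (Real.sqrt (2 * Real.pi) * h ^ 3) * (B + B)) ?_ hbpos
        intro u
        rw [abs_mul, abs_of_pos (by positivity : (0:ℝ) < 1 / (Real.sqrt (2 * Real.pi) * h ^ 3))]
        refine mul_le_mul_of_nonneg_left ?_ (by positivity)
        exact (abs_sub _ _).trans (add_le_add (hB _) (hB _))
      have : (fun y : ℝ =>
          (1 / (Real.sqrt (2 * Real.pi) * h ^ 3) * (φ (y + x) - φ (y - x)))
            * (y * Real.exp (-b * y ^ 2))) = J := by
        funext y
        rw [hJ, show -b * y ^ 2 = -(y ^ 2) / (2 * h ^ 2) by rw [hbdef]; field_simp]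
        ring
      exact (this ▸ hint).integrableOn
    have hJnonpos : ∀ y ∈ Set.Ioi (0:ℝ), J y ≤ 0 := by
      intro y hy
      rw [hJ]
      have h1 : φ (y + x) - φ (y - x) ≤ 0 := sub_nonpos.mpr (hle y hy)
      have : (1 / (Real.sqrt (2 * Real.pi) * h ^ 3)) * (φ (y + x) - φ (y - x)) * y ≤ 0 :=
        mul_nonpos_of_nonpos_of_nonneg
          (mul_nonpos_of_nonneg_of_nonpos (by positivity) h1) (le_of_lt hy)
      exact mul_nonpos_of_nonpos_of_nonneg this (Real.exp_pos _).le
    have key : 0 < ∫ y in Set.Ioi (0:ℝ), -J y := by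
      rw [setIntegral_pos_iff_support_of_nonneg_ae]
      · refine lt_of_lt_of_le ?_ (measure_mono
          (show Set.Ioo 0 x ⊆ Function.support (fun y => -J y) ∩ Set.Ioi 0 from ?_))
        · rw [Real.volume_Ioo]
          exact ENNReal.ofReal_pos.mpr (by linarith)
        · intro y hy
          refine ⟨?_, hy.1⟩
          have hJneg : J y < 0 := by
            rw [hJ]
            have h1 : φ (y + x) - φ (y - x) < 0 :=
              sub_neg.mpr (hlt y hy.1 (ne_of_lt hy.2))
            have h2 : (1 / (Real.sqrt (2 * Real.pi) * h ^ 3)) * (φ (y + x) - φ (y - x)) * y < 0 :=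
              mul_neg_of_neg_of_pos (mul_neg_of_pos_of_neg (by positivity) h1) hy.1
            exact mul_neg_of_neg_of_pos h2 (Real.exp_pos _)
          simp only [Function.mem_support]
          intro hcontra
          rw [neg_eq_zero] at hcontra
          exact absurd hcontra (ne_of_lt hJneg)
      · exact (ae_restrict_iff' measurableSet_Ioi).2
          (ae_of_all _ fun y hy => neg_nonneg.2 (hJnonpos y hy))
      · exact hJint.neg
    rw [integral_neg] at key
    linarith
  intro x
  rcases lt_trichotomy x 0 with hx | rfl | hx
  · have hodd : deriv φh x = -deriv φh (-x) := by
      have h1 : HasDerivAt (fun y : ℝ => φh (-y)) ((∫ u, F' (-x) u) * (-1)) x :=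
        (hDF (-x)).comp x (hasDerivAt_neg x)
      have h2 : (fun y : ℝ => φh (-y)) = φh := funext heven
      rw [h2] at h1
      rw [h1.deriv, hderiv (-x)]
      ring
    rw [hodd, Real.sign_neg, Real.sign_of_neg (hneg (-x) (by linarith)),
      Real.sign_of_neg hx]
  · rw [hpart3 0]
    simp [Real.sign_zero]
  · rw [Real.sign_of_neg (hneg x hx), Real.sign_of_pos hx]
end
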